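/- If unit vectors {x_k}_{k∈[n]} in ℍ^d form a projective 2-design, i.e. (1/n²) Σ_{k,ℓ} ⟨x_k x_k^*, x_ℓ x_ℓ^*⟩² = 2·3/(2d(2d+1)) = 3/(d(2d+1)), then the 3-dimensional subspaces {S(x_k)}_{k∈[n]} form a tight fusion frame in the d(2d+1)-dimensional real vector space of d×d quaternionic anti-Hermitian matrices: (1/n²) Σ_{k,ℓ} ‖G_{x_k x_ℓ}‖_F² = 9/(d(2d+1)). -/

import Mathlib

open Matrix BigOperators

/-- The quaternion units `i, j, k`. -/
def qunit : Fin 3 → Quaternion ℝ := ![⟨0,1,0,0⟩, ⟨0,0,1,0⟩, ⟨0,0,0,1⟩]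

/-- The matrix `x z x^*` for `x ∈ ℍ^d`, `z ∈ ℍ`. -/
noncomputable def xzxStar {d : ℕ} (x : Fin d → Quaternion ℝ) (z : Quaternion ℝ) :
    Matrix (Fin d) (Fin d) (Quaternion ℝ) :=
  fun i j => x i * z * star (x j)

/-- The real inner product `⟨A,B⟩ = Re tr(A^*B)` on `ℍ^{d×d}`. -/
noncomputable def qmInner {d : ℕ} (A B : Matrix (Fin d) (Fin d) (Quaternion ℝ)) : ℝ :=
  (Matrix.trace (Aᴴ * B)).re

/-- The quaternionic inner product `x^*y = ∑ᵢ x̄ᵢ yᵢ`. -/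
noncomputable def qvInner {d : ℕ} (x y : Fin d → Quaternion ℝ) : Quaternion ℝ :=
  ∑ i, star (x i) * y i

/-- The rank-one matrix `x x^*`. -/
noncomputable def qRankOne {d : ℕ} (x : Fin d → Quaternion ℝ) :
    Matrix (Fin d) (Fin d) (Quaternion ℝ) :=
  fun i j => x i * star (x j)

/-- The `3×3` cross-Gramian of `S(x)` and `S(y)`. -/
noncomputable def crossGram {d : ℕ} (x y : Fin d → Quaternion ℝ) : Matrix (Fin 3) (Fin 3) ℝ :=
  fun a b => qmInner (xzxStar x (qunit a)) (xzxStar y (qunit b))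


lemma re_mul_comm' (a b : Quaternion ℝ) : (a * b).re = (b * a).re := by
  simp [Quaternion.re_mul]; ring

lemma re_sum' {ι : Type*} (s : Finset ι) (f : ι → Quaternion ℝ) :
    (∑ i ∈ s, f i).re = ∑ i ∈ s, (f i).re :=
  map_sum (QuaternionAlgebra.reₗ (-1 : ℝ) (0 : ℝ) (-1 : ℝ)) f s

lemma qm_eq {d : ℕ} (x y : Fin d → Quaternion ℝ) (u v : Quaternion ℝ) :
    qmInner (xzxStar x u) (xzxStar y v)
      = (star (qvInner x y) * (star u * (qvInner x y * v))).re := by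
  have hstar : (∑ i, star (y i) * x i) = star (qvInner x y) := by
    rw [qvInner, star_sum]
    exact Finset.sum_congr rfl fun i _ => by rw [StarMul.star_mul, star_star]
  rw [qmInner, Matrix.trace]
  simp only [Matrix.diag_apply, Matrix.mul_apply, Matrix.conjTranspose_apply, xzxStar]
  rw [re_sum']
  calc ∑ i, (∑ j, star (x j * u * star (x i)) * (y j * v * star (y i))).re
      = ∑ i, (star (y i) * (x i * (star u * (qvInner x y * v)))).re := by
        refine Finset.sum_congr rfl fun i _ => ?_
        rw [re_sum']
        have h1 : ∀ j, (star (x j * u * star (x i)) * (y j * v * star (y i))).re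
            = (star (y i) * (x i * (star u * ((star (x j) * y j) * v)))).re := by
          intro j
          rw [re_mul_comm' (star (y i)) (x i * (star u * ((star (x j) * y j) * v)))]
          congr 1
          simp only [StarMul.star_mul, star_star, mul_assoc]; rfl
        simp only [h1]
        rw [← re_sum']
        congr 1
        simp only [qvInner, Finset.sum_mul, Finset.mul_sum]; rfl
    _ = ((∑ i, star (y i) * x i) * (star u * (qvInner x y * v))).re := by
        rw [Finset.sum_mul, re_sum']
        exact Finset.sum_congr rfl fun i _ => by rw [mul_assoc]
    _ = _ := by rw [hstar]

lemma star_qunit (a : Fin 3) : star (qunit a) = -qunit a := by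
  fin_cases a <;> exact Quaternion.star_eq_neg.mpr (by simp [qunit])

lemma crossGram_sq {d : ℕ} (x y : Fin d → Quaternion ℝ) (a b : Fin 3) :
    (crossGram x y a b)^2
      = ((star (qvInner x y) * qunit a * qvInner x y * qunit b).re)^2 := by
  simp only [crossGram]
  rw [qm_eq, star_qunit]
  simp only [neg_mul, mul_neg, Quaternion.re_neg, neg_sq, mul_assoc]

lemma rank_eq {d : ℕ} (x y : Fin d → Quaternion ℝ) :
    qmInner (qRankOne x) (qRankOne y) = (star (qvInner x y) * qvInner x y).re := by
  have h : ∀ z : Fin d → Quaternion ℝ, qRankOne z = xzxStar z 1 := by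
    intro z; funext i j; simp [qRankOne, xzxStar]
  rw [h, h, qm_eq]
  simp

lemma key_sum (q : Quaternion ℝ) :
    ∑ a : Fin 3, ∑ b : Fin 3, ((star q * qunit a * q * qunit b).re)^2
      = 3 * ((star q * q).re)^2 := by
  simp [Fin.sum_univ_succ, qunit, Quaternion.re_mul, Quaternion.imI_mul, Quaternion.imJ_mul, Quaternion.imK_mul]
  ring

/-- Theorem 4.4(b): if unit vectors `{xₖ}` in `ℍ^d` form a projective 2-design,
i.e. `(1/n²) ∑_{k,ℓ} ⟨xₖxₖ^*, x_ℓx_ℓ^*⟩² = 3/(d(2d+1))`, then the subspaces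
`S(xₖ)` form a tight fusion frame in the `d(2d+1)`-dimensional space of
quaternionic anti-Hermitian matrices:
`(1/n²) ∑_{k,ℓ} ‖G_{xₖx_ℓ}‖_F² = 9/(d(2d+1))`. -/
theorem design_gives_tight_fusion_frame (d n : ℕ)
    (xs : Fin n → Fin d → Quaternion ℝ)
    (hunit : ∀ k, qvInner (xs k) (xs k) = 1)
    (hdesign : (1 / (n : ℝ) ^ 2) *
        ∑ k, ∑ ℓ, (qmInner (qRankOne (xs k)) (qRankOne (xs ℓ))) ^ 2
      = 3 / ((d : ℝ) * (2 * d + 1))) :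
    (1 / (n : ℝ) ^ 2) *
        ∑ k, ∑ ℓ, ∑ a : Fin 3, ∑ b : Fin 3, (crossGram (xs k) (xs ℓ) a b) ^ 2
      = 9 / ((d : ℝ) * (2 * d + 1)) := by
  have hterm : ∀ k ℓ, (∑ a : Fin 3, ∑ b : Fin 3, (crossGram (xs k) (xs ℓ) a b) ^ 2)
      = 3 * (qmInner (qRankOne (xs k)) (qRankOne (xs ℓ))) ^ 2 := by
    intro k ℓ
    simp only [crossGram_sq]
    rw [key_sum, rank_eq]
  calc (1 / (n : ℝ) ^ 2) *
        ∑ k, ∑ ℓ, ∑ a : Fin 3, ∑ b : Fin 3, (crossGram (xs k) (xs ℓ) a b) ^ 2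
      = 3 * ((1 / (n : ℝ) ^ 2) *
        ∑ k, ∑ ℓ, (qmInner (qRankOne (xs k)) (qRankOne (xs ℓ))) ^ 2) := by
        simp only [hterm, ← Finset.mul_sum]
        ring
    _ = 3 * (3 / ((d : ℝ) * (2 * d + 1))) := by rw [hdesign]
    _ = 9 / ((d : ℝ) * (2 * d + 1)) := by ring
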